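/- arXiv:1202.5417 — 8 statements merged into one kernel-verified Lean document; each statement's English description precedes it below -/
import Mathlib

section
/- Let L be a first-order language with no relation symbols and let H be an L-structure which is free of finite rank: there is n and a family e : Fin n → H such that the L-substructure generated by the range of e is all of H and every function f : Fin n → H extends to a unique L-homomorphism H → H sending each e i to f i. If H is weakly homogeneous, then H is logically perfect: for every k and every pair of tuples a, b : Fin k → H having the same type, there is an L-automorphism ψ of H with ψ (a i) = b i for all i. -/
open FirstOrder Language

/-- Two tuples have the same type if they realize exactly the same first-order formulas. -/
def SameType (L : FirstOrder.Language) {H : Type*} [L.Structure H] {k : ℕ}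
    (a b : Fin k → H) : Prop :=
  ∀ φ : L.Formula (Fin k), φ.Realize a ↔ φ.Realize b

/-- An `L`-structure `H` is weakly homogeneous if every isomorphism between finitely
generated substructures of `H` that extends, together with its inverse, to
endomorphisms of `H`, extends to an automorphism of `H`. -/
def WeaklyHomogeneous (L : FirstOrder.Language) (H : Type*) [L.Structure H] : Prop :=
  ∀ (A B : L.Substructure H), A.FG → B.FG →
    ∀ φ : L.Equiv A B,
      (∃ σ : L.Hom H H, ∀ x : A, σ (x : H) = (φ x : H)) →
      (∃ τ : L.Hom H H, ∀ y : B, τ (y : H) = (φ.symm y : H)) →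
      ∃ Φ : L.Equiv H H, ∀ x : A, Φ (x : H) = (φ x : H)

/-- If two tuples have the same type in a free structure, there is an endomorphism
sending one to the other. -/
lemma exists_hom_of_sameType {L : FirstOrder.Language} {H : Type*} [L.Structure H]
    {n : ℕ} {e : Fin n → H}
    (hgen : Substructure.closure L (Set.range e) = ⊤)
    (huniq : ∀ f : Fin n → H, ∃! ψ : L.Hom H H, ∀ i, ψ (e i) = f i)
    {k : ℕ} {a b : Fin k → H} (hst : SameType L a b) :
    ∃ σ : L.Hom H H, ∀ i, σ (a i) = b i := by
  -- each `a i` is a term in the generators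
  have hterm : ∀ i : Fin k, ∃ t : L.Term (Fin n), t.realize e = a i := by
    intro i
    have hmem : a i ∈ Substructure.closure L (Set.range e) := hgen ▸ Substructure.mem_top _
    obtain ⟨t, ht⟩ := (Substructure.mem_closure_iff_exists_term).1 hmem
    refine ⟨t.relabel (fun x => Classical.choose x.2), ?_⟩
    rw [Term.realize_relabel, ← ht]
    congr 1
    funext x
    exact (Classical.choose_spec x.2)
  choose t ht using hterm
  -- the formula "∃ y, ⋀ i, a i = t i (y)"
  set θ : L.Formula (Fin k) :=
    (BoundedFormula.iInf
      (fun i : Fin k =>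
        Term.bdEqual (Term.var (Sum.inl i)) ((t i).relabel Sum.inr))).exs with hθ
  have hreal : ∀ c : Fin k → H,
      θ.Realize c ↔ ∃ xs : Fin n → H, ∀ i, c i = (t i).realize xs := by
    intro c
    rw [hθ]
    rw [show ((BoundedFormula.iInf
      (fun i : Fin k =>
        Term.bdEqual (Term.var (Sum.inl i)) ((t i).relabel Sum.inr))).exs).Realize c ↔ _
      from BoundedFormula.realize_exs]
    refine exists_congr fun xs => ?_
    rw [BoundedFormula.realize_iInf]
    refine ⟨fun h i => ?_, fun h i => ?_⟩
    · have := h i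
      simpa [Term.realize_relabel, Sum.elim_comp_inr] using this
    · simpa [Term.realize_relabel, Sum.elim_comp_inr] using h i
  have ha : θ.Realize a := (hreal a).2 ⟨e, fun i => (ht i).symm⟩
  have hb : θ.Realize b := (hst θ).1 ha
  obtain ⟨e', he'⟩ := (hreal b).1 hb
  obtain ⟨σ, hσ, -⟩ := huniq e'
  refine ⟨σ, fun i => ?_⟩
  rw [← ht i, ← HomClass.realize_term (g := σ) (t := t i) (v := e), he' i]
  congr 1
  funext j
  exact hσ j

theorem weaklyHomogeneous_free_is_logically_perfect
    {L : FirstOrder.Language} [L.IsAlgebraic] {H : Type*} [L.Structure H]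
    -- `H` is a free structure of finite rank:
    (hfree : ∃ (n : ℕ) (e : Fin n → H),
      Substructure.closure L (Set.range e) = ⊤ ∧
        ∀ f : Fin n → H, ∃! ψ : L.Hom H H, ∀ i, ψ (e i) = f i)
    (hwh : WeaklyHomogeneous L H) :
    ∀ (k : ℕ) (a b : Fin k → H), SameType L a b →
      ∃ ψ : L.Equiv H H, ∀ i, ψ (a i) = b i := by
  obtain ⟨n, e, hgen, huniq⟩ := hfree
  intro k a b hst
  have hst' : SameType L b a := fun φ => (hst φ).symm
  obtain ⟨σ, hσ⟩ := exists_hom_of_sameType hgen huniq hst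
  obtain ⟨τ, hτ⟩ := exists_hom_of_sameType hgen huniq hst'
  set A := Substructure.closure L (Set.range a) with hA
  set B := Substructure.closure L (Set.range b) with hB
  -- σ maps A into B, τ maps B into A
  have hσAB : ∀ x : H, x ∈ A → σ x ∈ B := by
    intro x hx
    have : A ≤ B.comap σ := by
      rw [hA, Substructure.closure_le]
      rintro _ ⟨i, rfl⟩
      exact Substructure.mem_comap.2
        (by rw [hσ i]; exact Substructure.subset_closure (Set.mem_range_self i))
    exact this hx
  have hτBA : ∀ x : H, x ∈ B → τ x ∈ A := by
    intro x hx
    have : B ≤ A.comap τ := by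
      rw [hB, Substructure.closure_le]
      rintro _ ⟨i, rfl⟩
      exact Substructure.mem_comap.2
        (by rw [hτ i]; exact Substructure.subset_closure (Set.mem_range_self i))
    exact this hx
  -- τ ∘ σ = id on A, σ ∘ τ = id on B
  have hτσ : ∀ x : H, x ∈ A → τ (σ x) = x := by
    have : Set.EqOn (τ.comp σ) (Hom.id L H) (A : Set H) := by
      rw [hA]
      apply Hom.eqOn_closure
      rintro _ ⟨i, rfl⟩
      simp [hσ i, hτ i]
    exact fun x hx => this hx
  have hστ : ∀ x : H, x ∈ B → σ (τ x) = x := by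
    have : Set.EqOn (σ.comp τ) (Hom.id L H) (B : Set H) := by
      rw [hB]
      apply Hom.eqOn_closure
      rintro _ ⟨i, rfl⟩
      simp [hσ i, hτ i]
    exact fun x hx => this hx
  -- the isomorphism A ≃[L] B
  let φ : L.Equiv A B :=
    { toFun := fun x => ⟨σ x, hσAB x x.2⟩
      invFun := fun y => ⟨τ y, hτBA y y.2⟩
      left_inv := fun x => Subtype.ext (hτσ x x.2)
      right_inv := fun y => Subtype.ext (hστ y y.2)
      map_fun' := fun {m} f x => by
        apply Subtype.ext
        exact σ.map_fun f _
      map_rel' := fun {m} r _ => isEmptyElim r }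
  have hAfg : A.FG := Substructure.fg_closure (Set.finite_range a)
  have hBfg : B.FG := Substructure.fg_closure (Set.finite_range b)
  obtain ⟨Φ, hΦ⟩ := hwh A B hAfg hBfg φ ⟨σ, fun x => rfl⟩ ⟨τ, fun y => rfl⟩
  refine ⟨Φ, fun i => ?_⟩
  have hai : a i ∈ A := Substructure.subset_closure (Set.mem_range_self i)
  have h1 := hΦ ⟨a i, hai⟩
  have h2 : ((φ ⟨a i, hai⟩ : B) : H) = σ (a i) := rfl
  rw [h1, h2, hσ i]
end

section
/- Let S := FreeSemigroup (Fin k) be the free semigroup on k generators. Let A and B be finitely generated subsemigroups of S and φ : A ≃* B a semigroup isomorphism. If there exist semigroup homomorphisms σ : S →ₙ* S and τ : S →ₙ* S such that σ agrees with φ on A and τ agrees with φ⁻¹ on B, then there exists a semigroup automorphism of S that agrees with φ on A. In other words, every finitely generated free semigroup is weakly homogeneous. -/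
/-- A subsemigroup is finitely generated if it is the closure of a finite subset. -/
def Subsemigroup.FG' {S : Type*} [Mul S] (A : Subsemigroup S) : Prop :=
  ∃ s : Finset S, Subsemigroup.closure (s : Set S) = A

namespace FreeSemigroupWH

open FreeSemigroup

variable {α : Type*}

/-- A letter occurs in a word. -/
def Occ (x : α) (w : FreeSemigroup α) : Prop := x = w.head ∨ x ∈ w.tail

lemma occ_of {x y : α} : Occ x (of y) ↔ x = y := by
  simp [Occ, of]

lemma occ_of_mul {x y : α} {w : FreeSemigroup α} :
    Occ x (of y * w) ↔ x = y ∨ Occ x w := by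
  cases w
  simp only [Occ, of, mk_mul_mk, List.nil_append, List.mem_cons]

/-- Any semigroup endomorphism of a free semigroup does not decrease length. -/
lemma length_le_length_map (f : FreeSemigroup α →ₙ* FreeSemigroup α) (w : FreeSemigroup α) :
    w.length ≤ (f w).length := by
  induction w with
  | ih1 x =>
    show 1 ≤ _
    simp [FreeSemigroup.length]
  | ih2 x y hx hy =>
    rw [map_mul, length_mul, length_mul]
    exact Nat.add_le_add hx hy

lemma eq_of_of_length_one {w : FreeSemigroup α} (h : w.length = 1) : w = of w.head := by
  have ht : w.tail = [] := by
    simp only [FreeSemigroup.length] at h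
    simpa [List.length_eq_zero_iff] using Nat.succ_injective h
  cases w
  simp_all [of]

/-- If an endomorphism fixes a word, it fixes each letter occurring in it. -/
lemma fix_letters (f : FreeSemigroup α →ₙ* FreeSemigroup α) :
    ∀ w : FreeSemigroup α, f w = w → ∀ x, Occ x w → f (of x) = of x := by
  intro w
  induction w with
  | ih1 y =>
    intro hw x hx
    rw [occ_of] at hx
    subst hx; exact hw
  | ih2 y z _ ihz =>
    intro hw x hx
    have hlen : (f (of y)).length + (f z).length = 1 + z.length := by
      have h := congrArg FreeSemigroup.length hw
      rwa [map_mul, length_mul, length_mul, length_of] at h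
    have h1 : 1 ≤ (f (of y)).length := by
      simpa using length_le_length_map f (of y)
    have h2 : z.length ≤ (f z).length := length_le_length_map f z
    have h1' : (f (of y)).length = 1 := by omega
    have hc : f (of y) = of (f (of y)).head := eq_of_of_length_one h1'
    rw [map_mul, hc] at hw
    -- of c * f z = of y * z
    have hhead := congrArg FreeSemigroup.head hw
    have htail := congrArg FreeSemigroup.tail hw
    simp only [head_mul, tail_mul, of_head, of_tail, List.nil_append,
      List.cons.injEq] at hhead htail
    have hfz : f z = z := FreeSemigroup.ext htail.1 htail.2
    have hfy : f (of y) = of y := by rw [hc, hhead]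
    rcases occ_of_mul.mp hx with rfl | hxz
    · exact hfy
    · exact ihz hfz x hxz

/-- Two homomorphisms agreeing on all letters of a word agree on the word. -/
lemma hom_eq_of_letters {β : Type*} [Semigroup β] (F G : FreeSemigroup α →ₙ* β)
    (w : FreeSemigroup α) (h : ∀ x, Occ x w → F (of x) = G (of x)) : F w = G w := by
  induction w with
  | ih1 y => exact h y (occ_of.mpr rfl)
  | ih2 y z _ ihz =>
    rw [map_mul, map_mul, h y (occ_of_mul.mpr (Or.inl rfl)),
      ihz fun x hx => h x (occ_of_mul.mpr (Or.inr hx))]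

/-- The automorphism of a free semigroup induced by a permutation of letters. -/
def mapEquiv {β : Type*} (e : α ≃ β) : FreeSemigroup α ≃* FreeSemigroup β where
  toFun := FreeSemigroup.map e
  invFun := FreeSemigroup.map e.symm
  left_inv w := by
    induction w with
    | ih1 x => simp
    | ih2 x y hx hy => simp_all
  right_inv w := by
    induction w with
    | ih1 x => simp
    | ih2 x y hx hy => simp_all
  map_mul' := map_mul _

end FreeSemigroupWH

open FreeSemigroupWH FreeSemigroup in
/-- Finitely generated free semigroups are weakly homogeneous: if `φ : A ≃* B` is an
isomorphism between finitely generated subsemigroups of the free semigroup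
`S = FreeSemigroup (Fin k)`, and both `φ` and `φ⁻¹` extend to semigroup endomorphisms
of `S`, then `φ` extends to an automorphism of `S`. -/
theorem free_semigroup_weakly_homogeneous {k : ℕ}
    (A B : Subsemigroup (FreeSemigroup (Fin k))) (hA : A.FG') (hB : B.FG')
    (φ : A ≃* B)
    (σ : FreeSemigroup (Fin k) →ₙ* FreeSemigroup (Fin k))
    (hσ : ∀ a : A, σ (a : FreeSemigroup (Fin k)) = (φ a : FreeSemigroup (Fin k)))
    (τ : FreeSemigroup (Fin k) →ₙ* FreeSemigroup (Fin k))
    (hτ : ∀ b : B, τ (b : FreeSemigroup (Fin k)) = (φ.symm b : FreeSemigroup (Fin k))) :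
    ∃ Φ : FreeSemigroup (Fin k) ≃* FreeSemigroup (Fin k),
      ∀ a : A, Φ (a : FreeSemigroup (Fin k)) = (φ a : FreeSemigroup (Fin k)) := by
  classical
  -- τ ∘ σ fixes every element of A
  have hfix : ∀ a : A, (τ.comp σ) (a : FreeSemigroup (Fin k)) = a := by
    intro a
    have := hτ (φ a)
    simp only [MulEquiv.symm_apply_apply] at this
    simp [MulHom.comp_apply, hσ a, this]
  -- the set of letters fixed by τ ∘ σ
  set L : Set (Fin k) := {x | (τ.comp σ) (of x) = of x} with hL
  -- letters of elements of A are in L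
  have hmemL : ∀ a : A, ∀ x, Occ x (a : FreeSemigroup (Fin k)) → x ∈ L := fun a x hx =>
    fix_letters (τ.comp σ) _ (hfix a) x hx
  -- σ maps letters of L to single letters
  set g : Fin k → Fin k := fun x => (σ (of x)).head with hg
  have hσL : ∀ x ∈ L, σ (of x) = of (g x) := by
    intro x hx
    have h1 : 1 ≤ (σ (of x)).length := by simpa using length_le_length_map σ (of x)
    have h2 : (σ (of x)).length ≤ (τ (σ (of x))).length := length_le_length_map τ _
    have h3 : τ (σ (of x)) = of x := hx
    rw [h3, length_of] at h2
    exact eq_of_of_length_one (le_antisymm h2 h1)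
  -- g is injective on L
  have hinj : Set.InjOn g L := by
    intro x hx y hy hxy
    have hx' : τ (of (g x)) = of x := by rw [← hσL x hx]; exact hx
    have hy' : τ (of (g y)) = of y := by rw [← hσL y hy]; exact hy
    have hoo : FreeSemigroup.of x = FreeSemigroup.of y := by
      rw [← hx', hxy, hy']
    exact congrArg FreeSemigroup.head hoo
  -- extend g on L to a permutation of Fin k
  have hcard : Fintype.card ↥(g '' L)ᶜ = Fintype.card ↥Lᶜ := by
    have h1 : Fintype.card ↥(g '' L) = Fintype.card ↥L :=
      (Fintype.card_congr (Equiv.Set.imageOfInjOn g L hinj)).symm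
    rw [Fintype.card_compl_set, Fintype.card_compl_set, h1]
  set π : Equiv.Perm (Fin k) :=
    (Equiv.Set.sumCompl L).symm.trans
      (((Equiv.Set.imageOfInjOn g L hinj).sumCongr
        (Fintype.equivOfCardEq hcard.symm)).trans (Equiv.Set.sumCompl (g '' L))) with hπ
  have hπL : ∀ x ∈ L, π x = g x := by
    intro x hx
    simp only [hπ, Equiv.trans_apply, Equiv.Set.sumCompl_symm_apply_of_mem hx,
      Equiv.sumCongr_apply, Sum.map_inl, Equiv.Set.sumCompl_apply_inl,
      Equiv.Set.imageOfInjOn, Equiv.coe_fn_mk]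
  refine ⟨mapEquiv π, fun a => ?_⟩
  rw [← hσ a]
  have : (mapEquiv π : FreeSemigroup (Fin k) →ₙ* FreeSemigroup (Fin k)) = FreeSemigroup.map π :=
    rfl
  show FreeSemigroup.map (⇑π) (a : FreeSemigroup (Fin k)) = σ (a : FreeSemigroup (Fin k))
  refine hom_eq_of_letters (FreeSemigroup.map π) σ _ fun x hx => ?_
  have hxL := hmemL a x hx
  rw [map_of, hπL x hxL, hσL x hxL]
end

section
/- Finitely generated free abelian groups are logically perfect: let H := (Fin n → ℤ) be the free abelian group of rank n, regarded as a structure for the language of abelian groups. For every k and every pair of tuples a, b : Fin k → H such that a and b have the same type, there exists an additive group automorphism e : H ≃+ H with e (a i) = b i for all i. -/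
/-- Function symbols of the first-order language of abelian groups:
a binary addition, a unary negation and a constant zero. -/
inductive AbGroupFunc : ℕ → Type
  | add : AbGroupFunc 2
  | neg : AbGroupFunc 1
  | zero : AbGroupFunc 0

/-- The first-order language of abelian groups. -/
def LAb : FirstOrder.Language where
  Functions := AbGroupFunc
  Relations := fun _ => Empty

/-- Any additive commutative group is an `LAb`-structure in the obvious way. -/
instance LAb.structureOfAddCommGroup (G : Type*) [AddCommGroup G] :
    LAb.Structure G where
  funMap f x :=
    match f with
    | AbGroupFunc.add => x 0 + x 1
    | AbGroupFunc.neg => -x 0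
    | AbGroupFunc.zero => 0
  RelMap r _ := r.elim

namespace LAbAux

open FirstOrder FirstOrder.Language

variable {β : Type*}

def t0 : LAb.Term β := Term.func AbGroupFunc.zero ![]
def tadd (s t : LAb.Term β) : LAb.Term β := Term.func AbGroupFunc.add ![s, t]
def tneg (t : LAb.Term β) : LAb.Term β := Term.func AbGroupFunc.neg ![t]

def nsmulT : ℕ → LAb.Term β → LAb.Term β
  | 0, _ => t0
  | (m+1), t => tadd t (nsmulT m t)

def zsmulT (z : ℤ) (t : LAb.Term β) : LAb.Term β :=
  if 0 ≤ z then nsmulT z.toNat t else tneg (nsmulT (-z).toNat t)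

def sumT : List (LAb.Term β) → LAb.Term β
  | [] => t0
  | (t :: ts) => tadd t (sumT ts)

variable {G : Type*} [AddCommGroup G] (v : β → G)

@[simp] lemma realize_t0 : Term.realize v (t0 : LAb.Term β) = 0 := rfl

@[simp] lemma realize_tadd (s t : LAb.Term β) :
    Term.realize v (tadd s t) = Term.realize v s + Term.realize v t := rfl

@[simp] lemma realize_tneg (t : LAb.Term β) :
    Term.realize v (tneg t) = -Term.realize v t := rfl

@[simp] lemma realize_nsmulT (m : ℕ) (t : LAb.Term β) :
    Term.realize v (nsmulT m t) = m • Term.realize v t := by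
  induction m with
  | zero => simp [nsmulT]
  | succ m ih => simp [nsmulT, ih, succ_nsmul, add_comm]

@[simp] lemma realize_zsmulT (z : ℤ) (t : LAb.Term β) :
    Term.realize v (zsmulT z t) = z • Term.realize v t := by
  by_cases hz : 0 ≤ z
  · simp [zsmulT, hz]
    rw [← natCast_zsmul, Int.toNat_of_nonneg hz]
  · simp only [zsmulT, hz, if_false, realize_tneg, realize_nsmulT]
    rw [← natCast_zsmul, Int.toNat_of_nonneg (by omega : (0:ℤ) ≤ -z), neg_zsmul, neg_neg]

@[simp] lemma realize_sumT (l : List (LAb.Term β)) :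
    Term.realize v (sumT l) = (l.map (Term.realize v)).sum := by
  induction l with
  | nil => simp [sumT]
  | cons t ts ih => simp [sumT, ih]

/-- the formula `∃ x, d • x = ∑ i, c i • v i`. -/
def divFormula {k : ℕ} (d : ℤ) (c : Fin k → ℤ) : LAb.Formula (Fin k) :=
  (Term.bdEqual (zsmulT d (Term.var (Sum.inr (0 : Fin 1))))
    (sumT ((List.finRange k).map fun i => zsmulT (c i) (Term.var (Sum.inl i))))).ex

lemma realize_divFormula {k : ℕ} (d : ℤ) (c : Fin k → ℤ) (a : Fin k → G) :
    (divFormula d c).Realize a ↔ ∃ x : G, d • x = ∑ i, c i • a i := by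
  rw [Formula.Realize, divFormula]
  simp only [BoundedFormula.realize_ex, BoundedFormula.realize_bdEqual]
  refine exists_congr fun x => ?_
  have h0 : (Sum.elim a (Fin.snoc default x) : Fin k ⊕ Fin 1 → G) (Sum.inr 0) = x := by
    simp [Fin.snoc]
  simp [h0, List.map_map, Function.comp_def, Fin.sum_univ_def, List.ofFn_eq_map]

end LAbAux


open Submodule

/-- A submodule closed under division is complemented. -/
lemma pure_isCompl {n : ℕ} (Q : Submodule ℤ (Fin n → ℤ))
    (hQ : ∀ (m : ℤ) (x : Fin n → ℤ), m • x ∈ Q → m ≠ 0 → x ∈ Q) :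
    ∃ Q', IsCompl Q Q' := by
  have htf : NoZeroSMulDivisors ℤ ((Fin n → ℤ) ⧸ Q) := by
    constructor
    intro m y hmy
    by_contra hc
    push_neg at hc
    obtain ⟨hm, hy⟩ := hc
    obtain ⟨x, rfl⟩ := Q.mkQ_surjective y
    apply hy
    rw [Submodule.mkQ_apply, Submodule.Quotient.mk_eq_zero]
    have : Q.mkQ (m • x) = 0 := by
      rw [Submodule.mkQ_apply, Submodule.Quotient.mk_smul]
      exact hmy
    rw [Submodule.mkQ_apply, Submodule.Quotient.mk_eq_zero] at this
    exact hQ m x this hm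
  have hfree : Module.Free ℤ ((Fin n → ℤ) ⧸ Q) :=
    Module.free_iff_isTorsionFree.mpr (by infer_instance)
  obtain ⟨s, hs⟩ := Module.projective_lifting_property Q.mkQ LinearMap.id Q.mkQ_surjective
  have hmem : ∀ x : Fin n → ℤ, x - s (Q.mkQ x) ∈ Q := by
    intro x
    rw [← Submodule.Quotient.mk_eq_zero, ← Submodule.mkQ_apply, map_sub]
    have := congrFun (congrArg DFunLike.coe hs) (Q.mkQ x)
    simp only [LinearMap.coe_comp, Function.comp_apply, LinearMap.id_apply] at this
    rw [this, sub_self]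
  let f : (Fin n → ℤ) →ₗ[ℤ] Q :=
    (LinearMap.id - s.comp Q.mkQ).codRestrict Q (by intro x; simpa using hmem x)
  have hf : ∀ x : Q, f x = x := by
    intro ⟨x, hx⟩
    ext
    simp only [f, LinearMap.codRestrict_apply, LinearMap.sub_apply, LinearMap.id_apply,
      LinearMap.coe_comp, Function.comp_apply]
    have : Q.mkQ x = 0 := by rwa [Submodule.mkQ_apply, Submodule.Quotient.mk_eq_zero]
    rw [this, map_zero, sub_zero]
  exact ⟨LinearMap.ker f, LinearMap.isCompl_of_proj hf⟩

/-- purity of a family implies linear independence. -/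
lemma pure_li {n r : ℕ} (q : Fin r → (Fin n → ℤ))
    (hq : ∀ (m : ℤ) (c : Fin r → ℤ) (x : Fin n → ℤ),
      m • x = ∑ i, c i • q i → ∀ i, m ∣ c i) :
    LinearIndependent ℤ q := by
  rw [Fintype.linearIndependent_iff]
  intro c hc i
  have := hq 0 c 0 (by simpa using hc.symm) i
  exact zero_dvd_iff.mp this

lemma pure_div_closed {n r : ℕ} (q : Fin r → (Fin n → ℤ))
    (hq : ∀ (m : ℤ) (c : Fin r → ℤ) (x : Fin n → ℤ),
      m • x = ∑ i, c i • q i → ∀ i, m ∣ c i) :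
    ∀ (m : ℤ) (x : Fin n → ℤ), m • x ∈ span ℤ (Set.range q) → m ≠ 0 →
      x ∈ span ℤ (Set.range q) := by
  intro m x hx hm
  rw [mem_span_range_iff_exists_fun] at hx ⊢
  obtain ⟨c, hc⟩ := hx
  have hdvd := hq m c x hc.symm
  choose t ht using hdvd
  refine ⟨t, ?_⟩
  have : m • x = m • ∑ i, t i • q i := by
    rw [← hc, Finset.smul_sum]
    congr 1
    ext i
    rw [ht i, mul_smul]
  exact smul_right_injective _ hm this.symm

lemma equiv_of_pure {n r : ℕ} (p q : Fin r → (Fin n → ℤ))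
    (hp : ∀ (m : ℤ) (c : Fin r → ℤ) (x : Fin n → ℤ),
      m • x = ∑ i, c i • p i → ∀ i, m ∣ c i)
    (hq : ∀ (m : ℤ) (c : Fin r → ℤ) (x : Fin n → ℤ),
      m • x = ∑ i, c i • q i → ∀ i, m ∣ c i) :
    ∃ e : (Fin n → ℤ) ≃ₗ[ℤ] (Fin n → ℤ), ∀ i, e (p i) = q i := by
  classical
  have lip := pure_li p hp
  have liq := pure_li q hq
  set P := span ℤ (Set.range p) with hPdef
  set Q := span ℤ (Set.range q) with hQdef
  obtain ⟨P', hP⟩ := pure_isCompl P (pure_div_closed p hp)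
  obtain ⟨Q', hQ⟩ := pure_isCompl Q (pure_div_closed q hq)
  let bP : Module.Basis (Fin r) ℤ P := Module.Basis.span lip
  let bQ : Module.Basis (Fin r) ℤ Q := Module.Basis.span liq
  let eP : (↥P × ↥P') ≃ₗ[ℤ] (Fin n → ℤ) :=
    Submodule.prodEquivOfIsCompl P P' hP
  let eQ : (↥Q × ↥Q') ≃ₗ[ℤ] (Fin n → ℤ) :=
    Submodule.prodEquivOfIsCompl Q Q' hQ
  -- finrank of complements agree
  have hre : Module.finrank ℤ P' = Module.finrank ℤ Q' := by
    have h1 : Module.finrank ℤ (↥P × ↥P') = Module.finrank ℤ (Fin n → ℤ) :=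
      eP.finrank_eq
    have h2 : Module.finrank ℤ (↥Q × ↥Q') = Module.finrank ℤ (Fin n → ℤ) :=
      eQ.finrank_eq
    rw [Module.finrank_prod] at h1 h2
    rw [Module.finrank_eq_card_basis bP] at h1
    rw [Module.finrank_eq_card_basis bQ] at h2
    omega
  let bP' := Module.Free.chooseBasis ℤ P'
  let bQ' := Module.Free.chooseBasis ℤ Q'
  have hcard : Fintype.card (Module.Free.ChooseBasisIndex ℤ P') =
      Fintype.card (Module.Free.ChooseBasisIndex ℤ Q') := by
    rw [← Module.finrank_eq_card_chooseBasisIndex, ← Module.finrank_eq_card_chooseBasisIndex, hre]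
  let e' : P' ≃ₗ[ℤ] Q' := bP'.equiv bQ' (Fintype.equivOfCardEq hcard)
  let ePQ : ↥P ≃ₗ[ℤ] ↥Q := bP.equiv bQ (Equiv.refl _)
  refine ⟨eP.symm ≪≫ₗ (ePQ.prodCongr e') ≪≫ₗ eQ, fun i => ?_⟩
  have hpmem : p i ∈ P := subset_span (Set.mem_range_self i)
  have h1 : eP.symm (p i) = ((⟨p i, hpmem⟩ : P), (0 : P')) :=
    Submodule.prodEquivOfIsCompl_symm_apply_left P P' hP (⟨p i, hpmem⟩ : P)
  have h2 : ePQ ⟨p i, hpmem⟩ = bQ i := by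
    have : (⟨p i, hpmem⟩ : P) = bP i :=
      (Module.Basis.span_apply lip i).symm
    rw [this]
    simp [ePQ, Module.Basis.equiv_apply]
  have h3 : (bQ i : Fin n → ℤ) = q i := congrArg Subtype.val (Module.Basis.span_apply liq i)
  simp only [LinearEquiv.trans_apply, h1, LinearEquiv.prodCongr_apply, Prod.map, map_zero, h2]
  rw [Submodule.coe_prodEquivOfIsCompl']
  simp [h3]



open Submodule

/-- Finitely generated free abelian groups are logically perfect: any two tuples in
`Fin n → ℤ` with the same first-order type are related by an automorphism. -/
theorem free_abelian_logically_perfect (n k : ℕ) (a b : Fin k → (Fin n → ℤ))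
    (h : ∀ φ : LAb.Formula (Fin k), φ.Realize a ↔ φ.Realize b) :
    ∃ e : (Fin n → ℤ) ≃+ (Fin n → ℤ), ∀ i, e (a i) = b i := by
  classical
  have H : ∀ (d : ℤ) (c : Fin k → ℤ),
      (∃ x : Fin n → ℤ, d • x = ∑ i, c i • a i) ↔ (∃ x : Fin n → ℤ, d • x = ∑ i, c i • b i) := by
    intro d c
    rw [← LAbAux.realize_divFormula, ← LAbAux.realize_divFormula]
    exact h _
  have Hker : ∀ c : Fin k → ℤ, ∑ i, c i • a i = 0 → ∑ i, c i • b i = 0 := by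
    intro c hc
    obtain ⟨x, hx⟩ := (H 0 c).mp ⟨0, by rw [zero_smul, hc]⟩
    rw [zero_smul] at hx
    exact hx.symm
  set N : Submodule ℤ (Fin n → ℤ) := Submodule.span ℤ (Set.range a) with hN
  obtain ⟨r, snf⟩ := N.smithNormalForm (Pi.basisFun ℤ (Fin n))
  set d : Fin r → ℤ := snf.a with hd
  set p : Fin r → (Fin n → ℤ) := fun i => snf.bM (snf.f i) with hpdef
  have hd0 : ∀ i, d i ≠ 0 := by
    intro i hi
    have h1 : (snf.bN i : Fin n → ℤ) = 0 := by rw [snf.snf i, ← hd, hi, zero_smul]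
    exact snf.bN.ne_zero i (Subtype.ext h1)
  have hbNmem : ∀ i, (snf.bN i : Fin n → ℤ) ∈ span ℤ (Set.range a) := fun i => (snf.bN i).2
  choose cc hcc using fun i => (mem_span_range_iff_exists_fun ℤ).mp (hbNmem i)
  have hcc' : ∀ i, ∑ j, cc i j • a j = d i • p i := by
    intro i
    rw [hcc i, snf.snf i]
  -- the images
  have hw : ∀ i, ∃ x : Fin n → ℤ, d i • x = ∑ j, cc i j • b j :=
    fun i => (H (d i) (cc i)).mp ⟨p i, (hcc' i).symm⟩
  choose q hq using hw
  -- swap-sums lemma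
  have key : ∀ (v : Fin k → Fin n → ℤ) (g : Fin r → ℤ),
      ∑ t, (∑ j, g j * cc j t) • v t = ∑ j, g j • ∑ t, cc j t • v t := by
    intro v g
    simp_rw [Finset.sum_smul, Finset.smul_sum, mul_smul]
    exact Finset.sum_comm
  -- purity of p
  have hp_pure : ∀ (m : ℤ) (c : Fin r → ℤ) (x : Fin n → ℤ),
      m • x = ∑ i, c i • p i → ∀ i, m ∣ c i := by
    intro m c x hx i
    have h2 := congrArg (fun y => snf.bM.repr y (snf.f i)) hx
    simp only [map_smul, map_sum, Finsupp.smul_apply, Finsupp.coe_smul, Pi.smul_apply, hpdef,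
      Module.Basis.repr_self, Finsupp.single_apply, snf.f.injective.eq_iff, smul_eq_mul,
      Finsupp.coe_finset_sum, Finset.sum_apply, mul_ite, mul_one, mul_zero,
      Finset.sum_ite_eq, Finset.sum_ite_eq', Finset.mem_univ, if_true] at h2
    exact ⟨_, h2.symm⟩
  -- purity of q
  have hq_pure : ∀ (m : ℤ) (c : Fin r → ℤ) (x : Fin n → ℤ),
      m • x = ∑ i, c i • q i → ∀ i, m ∣ c i := by
    intro m c x hx i
    set L : ℤ := ∏ j, d j with hL
    have hLne : L ≠ 0 := Finset.prod_ne_zero_iff.mpr fun j _ => hd0 j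
    have hdE : ∀ j, d j * (∏ x ∈ Finset.univ.erase j, d x) = L :=
      fun j => Finset.mul_prod_erase Finset.univ d (Finset.mem_univ j)
    set E : Fin r → ℤ := fun j => ∏ x ∈ Finset.univ.erase j, d x with hE
    set C : Fin k → ℤ := fun t => ∑ j, (c j * E j) * cc j t with hC
    have hCb : ∑ t, C t • b t = (m * L) • x := by
      rw [hC]
      rw [key b (fun j => c j * E j)]
      have : ∀ j, (c j * E j) • ∑ t, cc j t • b t = (L * c j) • q j := by
        intro j
        rw [← hq j, smul_smul, mul_assoc, mul_comm (E j) (d j), hdE j, mul_comm (c j) L]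
      rw [Finset.sum_congr rfl fun j _ => this j]
      simp_rw [mul_smul, ← Finset.smul_sum]
      rw [← hx, smul_smul, smul_smul, mul_comm]
    have hCa : ∑ t, C t • a t = ∑ j, (L * c j) • p j := by
      rw [hC, key a (fun j => c j * E j)]
      refine Finset.sum_congr rfl fun j _ => ?_
      rw [hcc' j, smul_smul, mul_assoc, mul_comm (E j) (d j), hdE j, mul_comm (c j) L]
    obtain ⟨y, hy⟩ := (H (m * L) C).mpr ⟨x, hCb.symm⟩
    rw [hCa] at hy
    have hdvd := hp_pure (m * L) (fun j => L * c j) y hy i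
    obtain ⟨t, ht⟩ := hdvd
    refine ⟨t, ?_⟩
    have : L * c i = L * (m * t) := by rw [ht]; ring
    exact mul_left_cancel₀ hLne this
  obtain ⟨e, he⟩ := equiv_of_pure p q hp_pure hq_pure
  refine ⟨e.toAddEquiv, fun j => ?_⟩
  have hajN : a j ∈ N := subset_span (Set.mem_range_self j)
  set t : Fin r → ℤ := fun i => snf.bN.repr ⟨a j, hajN⟩ i with htdef
  have hrep : a j = ∑ i, t i • (snf.bN i : Fin n → ℤ) := by
    have h1 := snf.bN.sum_repr ⟨a j, hajN⟩
    have h2 := congrArg (fun z : N => (z : Fin n → ℤ)) h1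
    simpa only [htdef, Submodule.coe_sum, Submodule.coe_smul] using h2.symm
  set C' : Fin k → ℤ := fun s => ∑ i, t i * cc i s with hC'
  have hCa' : ∑ s, C' s • a s = a j := by
    rw [hC', key a t, hrep]
    refine Finset.sum_congr rfl fun i _ => ?_
    rw [hcc' i, snf.snf i]
  have hsingle : ∀ (v : Fin k → Fin n → ℤ), (∑ s, (if s = j then (1:ℤ) else 0) • v s) = v j := by
    intro v
    simp [ite_smul]
  have hker := Hker (fun s => C' s - (if s = j then (1:ℤ) else 0)) (by
    simp_rw [sub_smul]
    rw [Finset.sum_sub_distrib, hCa', hsingle a, sub_self])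
  simp_rw [sub_smul] at hker
  rw [Finset.sum_sub_distrib, hsingle b, sub_eq_zero] at hker
  -- now compute e (a j)
  have : e (a j) = ∑ s, C' s • b s := by
    rw [hrep]
    rw [map_sum]
    simp_rw [map_smul]
    have : ∀ i, e (snf.bN i : Fin n → ℤ) = d i • q i := by
      intro i
      rw [snf.snf i, map_smul, he i]
    rw [Finset.sum_congr rfl fun i _ => by rw [this i]]
    rw [hC', key b t]
    refine Finset.sum_congr rfl fun i _ => ?_
    rw [hq i]
  show e (a j) = b j
  rw [this, hker]
end

section
/- In the free group F₂ := FreeGroup (Fin 2) with free generators x₀, x₁, there is no group automorphism Φ of F₂ with Φ (x₀² * x₁ * x₀⁻¹ * x₁) = x₀ * x₁. -/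
namespace NoAutAux

abbrev G := Equiv.Perm (Fin 3)
abbrev F2 := FreeGroup (Fin 2)

def lp (p : G × G) : F2 →* G := FreeGroup.lift ![p.1, p.2]

lemma lp0 (p : G × G) : lp p (FreeGroup.of 0) = p.1 := by simp [lp]
lemma lp1 (p : G × G) : lp p (FreeGroup.of 1) = p.2 := by simp [lp]

lemma lift_eq (f : F2 →* G) : lp (f (FreeGroup.of 0), f (FreeGroup.of 1)) = f := by
  apply FreeGroup.ext_hom
  intro a
  fin_cases a <;> simp [lp]

def A := {p : G × G // p.1 * p.2 = 1}
def B := {p : G × G // p.1 ^ 2 * p.2 * p.1⁻¹ * p.2 = 1}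

instance : Fintype A := by unfold A; infer_instance
instance : Fintype B := by unfold B; infer_instance

end NoAutAux

open NoAutAux in
/-- There is no automorphism of the free group of rank 2 sending
`x₀² x₁ x₀⁻¹ x₁` to `x₀ x₁`, where `x₀`, `x₁` are the free generators. -/
theorem no_automorphism_freeGroup_rank_two :
    ¬ ∃ Φ : FreeGroup (Fin 2) ≃* FreeGroup (Fin 2),
        Φ ((FreeGroup.of 0) ^ 2 * FreeGroup.of 1 * (FreeGroup.of 0)⁻¹ * FreeGroup.of 1) =
          FreeGroup.of 0 * FreeGroup.of 1 := by
  rintro ⟨Φ, hΦ⟩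
  have hΦ' : Φ.symm (FreeGroup.of 0 * FreeGroup.of 1) =
      (FreeGroup.of 0) ^ 2 * FreeGroup.of 1 * (FreeGroup.of 0)⁻¹ * FreeGroup.of 1 := by
    rw [← hΦ, MulEquiv.symm_apply_apply]
  have e : A ≃ B := by
    refine ⟨fun p => ⟨(lp p.1 (Φ (FreeGroup.of 0)), lp p.1 (Φ (FreeGroup.of 1))), ?_⟩,
      fun q => ⟨(lp q.1 (Φ.symm (FreeGroup.of 0)), lp q.1 (Φ.symm (FreeGroup.of 1))), ?_⟩,
      ?_, ?_⟩
    · have h : lp p.1 (Φ (FreeGroup.of 0)) ^ 2 * lp p.1 (Φ (FreeGroup.of 1)) *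
          (lp p.1 (Φ (FreeGroup.of 0)))⁻¹ * lp p.1 (Φ (FreeGroup.of 1)) =
          lp p.1 (Φ ((FreeGroup.of 0) ^ 2 * FreeGroup.of 1 * (FreeGroup.of 0)⁻¹ *
            FreeGroup.of 1)) := by
        simp [map_mul, map_pow, map_inv]
      rw [h, hΦ, map_mul, lp0, lp1]
      exact p.2
    · have h : lp q.1 (Φ.symm (FreeGroup.of 0)) * lp q.1 (Φ.symm (FreeGroup.of 1)) =
          lp q.1 (Φ.symm (FreeGroup.of 0 * FreeGroup.of 1)) := by simp [map_mul]
      rw [h, hΦ']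
      simpa [map_mul, map_pow, map_inv, lp0, lp1] using q.2
    · intro p
      have key : lp (lp p.1 (Φ (FreeGroup.of 0)), lp p.1 (Φ (FreeGroup.of 1))) =
          (lp p.1).comp Φ.toMonoidHom := by
        have := lift_eq ((lp p.1).comp Φ.toMonoidHom)
        simpa using this
      apply Subtype.ext
      simp [key, lp0, lp1]
    · intro q
      have key : lp (lp q.1 (Φ.symm (FreeGroup.of 0)), lp q.1 (Φ.symm (FreeGroup.of 1))) =
          (lp q.1).comp Φ.symm.toMonoidHom := by
        have := lift_eq ((lp q.1).comp Φ.symm.toMonoidHom)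
        simpa using this
      apply Subtype.ext
      simp [key, lp0, lp1]
  have hc : Fintype.card A = Fintype.card B := Fintype.card_congr e
  have hA : Fintype.card A = 6 := by decide
  have hB : Fintype.card B = 12 := by set_option maxRecDepth 100000 in decide
  omega
end

section
/- Let L be a first-order language and let M and N be isotyped L-structures. Then for every finitely generated L-substructure A of M there exists an L-substructure B of N such that A and B are isomorphic as L-structures. -/
open FirstOrder Language

/-- Two `L`-structures are isotyped if every type of a tuple realized in one of them
is also realized in the other. -/
def Isotyped (L : FirstOrder.Language) (M N : Type*) [L.Structure M] [L.Structure N] :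
    Prop :=
  (∀ (n : ℕ) (a : Fin n → M), ∃ b : Fin n → N,
      ∀ φ : L.Formula (Fin n), φ.Realize a ↔ φ.Realize b) ∧
  (∀ (n : ℕ) (b : Fin n → N), ∃ a : Fin n → M,
      ∀ φ : L.Formula (Fin n), φ.Realize a ↔ φ.Realize b)

/-- If `M` and `N` are isotyped `L`-structures, then every finitely generated
substructure of `M` is isomorphic to some substructure of `N`. -/
theorem isotyped_fg_substructure {L : FirstOrder.Language} {M N : Type*}
    [L.Structure M] [L.Structure N] (h : Isotyped L M N)
    (A : L.Substructure M) (hA : A.FG) :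
    ∃ B : L.Substructure N, Nonempty (L.Equiv A B) := by
  obtain ⟨n, a, rfl⟩ := Substructure.fg_iff_exists_fin_generating_family.mp hA
  obtain ⟨b, hb⟩ := h.1 n a
  -- every element of the closure is the realization of a term in the generators
  have key : ∀ x : Substructure.closure L (Set.range a),
      ∃ t : L.Term (Fin n), t.realize a = (x : M) := by
    rintro ⟨x, hx⟩
    rw [Substructure.mem_closure_iff_exists_term] at hx
    obtain ⟨t, rfl⟩ := hx
    refine ⟨t.relabel fun y => Classical.choose y.2, ?_⟩
    rw [Term.realize_relabel]
    congr 1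
    funext y
    exact Classical.choose_spec y.2
  -- transferring equalities of terms between the two tuples
  have tr : ∀ t s : L.Term (Fin n), t.realize a = s.realize a ↔ t.realize b = s.realize b := by
    intro t s
    have := hb (t.equal s)
    rwa [Formula.realize_equal, Formula.realize_equal] at this
  set T : Substructure.closure L (Set.range a) → L.Term (Fin n) :=
    fun x => (key x).choose with hTdef
  have hT : ∀ x, (T x).realize a = (x : M) := fun x => (key x).choose_spec
  let f : Substructure.closure L (Set.range a) → N := fun x => (T x).realize b
  have hinj : Function.Injective f := by
    intro x y hxy
    have : (T x).realize a = (T y).realize a := (tr _ _).mpr hxy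
    rw [hT, hT] at this
    exact Subtype.ext this
  have hfun : ∀ {k} (F : L.Functions k) (x : Fin k → Substructure.closure L (Set.range a)),
      f (Structure.funMap F x) = Structure.funMap F (f ∘ x) := by
    intro k F x
    have h1 : (T (Structure.funMap F x)).realize a = (Term.func F fun i => T (x i)).realize a := by
      rw [hT]
      simp only [Term.realize_func, hT]
      rfl
    have h2 := (tr _ _).mp h1
    simp only [Term.realize_func] at h2
    exact h2
  have hrel : ∀ {k} (r : L.Relations k) (x : Fin k → Substructure.closure L (Set.range a)),
      Structure.RelMap r (f ∘ x) ↔ Structure.RelMap r x := by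
    intro k r x
    have hM : Structure.RelMap r x ↔ (r.formula fun i => T (x i)).Realize a := by
      rw [Formula.realize_rel]
      simp only [hT]
      rfl
    have hN : Structure.RelMap r (f ∘ x) ↔ (r.formula fun i => T (x i)).Realize b := by
      rw [Formula.realize_rel]
      rfl
    rw [hM, hN, hb]
  let e : Substructure.closure L (Set.range a) ↪[L] N :=
    ⟨⟨f, hinj⟩, fun F x => hfun F x, fun r x => hrel r x⟩
  exact ⟨e.toHom.range, ⟨e.equivRange⟩⟩
end

section
/- Let L be a first-order language and let M be a finitely generated L-structure that contains no proper L-substructure isomorphic (as an L-structure) to M itself. Then every L-structure N that is isotyped with M is isomorphic to M as an L-structure. -/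
open FirstOrder Language

open FirstOrder.Language.Substructure in
/-- Every element of a structure generated by `a` is the realization of a term in `a`. -/
lemma exists_term_of_closure_eq_top {L : FirstOrder.Language} {M : Type*} [L.Structure M]
    {n : ℕ} {a : Fin n → M}
    (ha : Substructure.closure L (Set.range a) = ⊤) (m : M) :
    ∃ t : L.Term (Fin n), t.realize a = m := by
  have hm : m ∈ Substructure.closure L (Set.range a) := by rw [ha]; exact trivial
  obtain ⟨t, ht⟩ := mem_closure_iff_exists_term.mp hm
  refine ⟨t.relabel (fun x => x.2.choose), ?_⟩
  rw [Term.realize_relabel]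
  rw [← ht]
  congr 1
  funext x
  exact x.2.choose_spec

/-- From a generating tuple `a` of `M` and a tuple `b` of `N` realizing the same type,
we get an embedding `M ↪[L] N` sending term realizations to term realizations. -/
lemma embedding_of_same_type {L : FirstOrder.Language} {M N : Type*}
    [L.Structure M] [L.Structure N] {n : ℕ} {a : Fin n → M} {b : Fin n → N}
    (ha : Substructure.closure L (Set.range a) = ⊤)
    (hab : ∀ φ : L.Formula (Fin n), φ.Realize a ↔ φ.Realize b) :
    ∃ f : M ↪[L] N, ∀ t : L.Term (Fin n), f (t.realize a) = t.realize b := by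
  classical
  have hterm := exists_term_of_closure_eq_top ha
  let F : M → N := fun m => ((hterm m).choose).realize b
  have hFspec : ∀ (t : L.Term (Fin n)), F (t.realize a) = t.realize b := by
    intro t
    have h1 : ((hterm (t.realize a)).choose).realize a = t.realize a :=
      (hterm (t.realize a)).choose_spec
    have := (hab (Term.equal ((hterm (t.realize a)).choose) t)).mp
    simp only [Formula.realize_equal] at this
    exact this h1
  have hinj : Function.Injective F := by
    intro m m' hmm'
    obtain ⟨t, ht⟩ := hterm m
    obtain ⟨t', ht'⟩ := hterm m'
    rw [← ht, ← ht'] at hmm' ⊢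
    rw [hFspec, hFspec] at hmm'
    have := (hab (Term.equal t t')).mpr
    simp only [Formula.realize_equal] at this
    exact this hmm'
  refine ⟨⟨⟨F, hinj⟩, ?_, ?_⟩, hFspec⟩
  · intro k g x
    choose ts hts using fun i => hterm (x i)
    have hx : x = fun i => (ts i).realize a := by funext i; exact (hts i).symm
    have : Structure.funMap g x = (Term.func g ts).realize a := by
      simp [Term.realize, hx]
    simp only [Function.Embedding.coeFn_mk]
    rw [this, hFspec]
    simp only [Term.realize]
    congr 1
    funext i
    rw [Function.comp_apply, hx]
    exact (hFspec (ts i)).symm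
  · intro k r x
    choose ts hts using fun i => hterm (x i)
    have hx : x = fun i => (ts i).realize a := by funext i; exact (hts i).symm
    have hFx : (F ∘ x) = fun i => (ts i).realize b := by
      funext i
      rw [Function.comp_apply, hx]
      exact hFspec (ts i)
    have := hab (Relations.formula r ts)
    simp only [Formula.realize_rel] at this
    simp only [Function.Embedding.coeFn_mk]
    constructor
    · intro hr
      rw [hx]
      exact this.mpr (by rw [← hFx]; exact hr)
    · intro hr
      have : Structure.RelMap r fun i => (ts i).realize b := this.mp (by rw [← hx]; exact hr)
      rw [show (F ∘ x) = fun i => (ts i).realize b from hFx]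
      exact this

/-- If a finitely generated `L`-structure `M` contains no proper substructure isomorphic
to `M` itself, then every `L`-structure isotyped with `M` is isomorphic to `M`. -/
theorem isotyped_iso_of_no_proper_self_embedding {L : FirstOrder.Language}
    {M N : Type*} [L.Structure M] [L.Structure N]
    (hfg : Structure.FG L M)
    (hno : ∀ A : L.Substructure M, A ≠ ⊤ → ¬ Nonempty (L.Equiv A M))
    (h : Isotyped L M N) :
    Nonempty (L.Equiv M N) := by
  classical
  obtain ⟨n, a, ha⟩ := Substructure.fg_iff_exists_fin_generating_family.mp
    (Structure.fg_def.mp hfg)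
  obtain ⟨b, hb⟩ := h.1 n a
  obtain ⟨f, hf⟩ := embedding_of_same_type ha hb
  -- surjectivity of f
  have hsurj : Function.Surjective f := by
    intro c
    obtain ⟨am, ham⟩ := h.2 (n + 1) (Fin.snoc b c)
    set a' : Fin n → M := am ∘ Fin.castSucc with ha'
    have haa' : ∀ φ : L.Formula (Fin n), φ.Realize a ↔ φ.Realize a' := by
      intro φ
      have h1 : φ.Realize a' ↔ (φ.relabel Fin.castSucc).Realize am := by
        rw [Formula.realize_relabel]
      have h2 : (φ.relabel Fin.castSucc).Realize (Fin.snoc b c) ↔ φ.Realize b := by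
        rw [Formula.realize_relabel]
        have : (Fin.snoc b c ∘ Fin.castSucc : Fin n → N) = b := by
          funext i; simp [Fin.snoc_castSucc]
        rw [this]
      rw [h1, ham, h2, hb]
    obtain ⟨g, hg⟩ := embedding_of_same_type ha haa'
    have hrange : g.toHom.range = ⊤ := by
      by_contra hne
      exact hno g.toHom.range hne ⟨g.equivRange.symm⟩
    have hm : am (Fin.last n) ∈ g.toHom.range := by rw [hrange]; exact trivial
    obtain ⟨x, hx⟩ := hm
    obtain ⟨t, ht⟩ := exists_term_of_closure_eq_top ha x
    have hma' : t.realize a' = am (Fin.last n) := by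
      rw [← hg t, ht]
      exact hx
    -- use the formula expressing that the last coordinate equals t of the rest
    have hφ := (ham (Term.equal (t.relabel Fin.castSucc) (Term.var (Fin.last n)))).mp
    simp only [Formula.realize_equal, Term.realize_relabel, Term.realize_var] at hφ
    have := hφ (by rw [show (am ∘ Fin.castSucc : Fin n → M) = a' from rfl]; exact hma')
    rw [Fin.snoc_last] at this
    refine ⟨t.realize a, ?_⟩
    rw [hf t]
    have hcomp : (Fin.snoc b c ∘ Fin.castSucc : Fin n → N) = b := by
      funext i; simp [Fin.snoc_castSucc]
    rw [hcomp] at this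
    exact this
  exact ⟨⟨Equiv.ofBijective f ⟨f.injective, hsurj⟩, f.map_fun', f.map_rel'⟩⟩
end

section
/- Let n ≥ 1, c ≥ 1, and let H := FreeGroup (Fin n) ⧸ lowerCentralSeries (FreeGroup (Fin n)) c be the free nilpotent group of class c and rank n, with canonical generators ē i (the images of the free generators of FreeGroup (Fin n)) and abelianization map η : H →* Abelianization H. If h : Fin n → H is a family of elements such that the images η (h i) form a ℤ-basis of the abelianization of H (which is a free abelian group of rank n), then Subgroup.closure (Set.range h) = ⊤ and there exists a group automorphism Φ of H with Φ (ē i) = h i for all i. -/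
open Subgroup
open scoped commutatorElement

/-- The free nilpotent group of class `c` and rank `n`: the quotient of the free group
on `n` generators by the `c`-th term of its lower central series. -/
abbrev FreeNilpotentGroup (n c : ℕ) : Type :=
  FreeGroup (Fin n) ⧸ (⊤ : Subgroup (FreeGroup (Fin n))).lowerCentralSeries c

open scoped Pointwise


lemma lcs_succ' {G : Type*} [Group G] (n : ℕ) :
    (⊤ : Subgroup G).lowerCentralSeries (n + 1) = ⁅(⊤ : Subgroup G).lowerCentralSeries n, (⊤ : Subgroup G)⁆ := rfl

lemma lcs_map_eq {G G' : Type*} [Group G] [Group G'] (f : G →* G')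
    (hf : Function.Surjective f) (k : ℕ) :
    Subgroup.map f ((⊤ : Subgroup G).lowerCentralSeries k) = (⊤ : Subgroup G').lowerCentralSeries k := by
  induction k with
  | zero => simpa using Subgroup.map_top_of_surjective f hf
  | succ k ih =>
    rw [lcs_succ', lcs_succ', Subgroup.map_commutator, ih,
      Subgroup.map_top_of_surjective f hf]

lemma lcs_quot_eq_bot (G : Type*) [Group G] (c : ℕ) :
    (⊤ : Subgroup (G ⧸ (⊤ : Subgroup G).lowerCentralSeries c)).lowerCentralSeries c = ⊥ := by
  rw [← lcs_map_eq (QuotientGroup.mk' _) (QuotientGroup.mk'_surjective _) c]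
  rw [Subgroup.map_eq_bot_iff, QuotientGroup.ker_mk']

lemma isNilpotent_quot (G : Type*) [Group G] (c : ℕ) :
    Group.IsNilpotent (G ⧸ (⊤ : Subgroup G).lowerCentralSeries c) :=
  Subgroup.nilpotent_iff_lowerCentralSeries.mpr ⟨c, lcs_quot_eq_bot G c⟩

lemma commutator_mem_of_sup_center {G : Type*} [Group G] (K : Subgroup G)
    (hKZ : K ⊔ Subgroup.center G = ⊤) (g₁ g₂ : G) : ⁅g₁, g₂⁆ ∈ K := by
  have h1 : g₁ ∈ (↑(K ⊔ Subgroup.center G) : Set G) := by rw [hKZ]; trivial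
  have h2 : g₂ ∈ (↑(K ⊔ Subgroup.center G) : Set G) := by rw [hKZ]; trivial
  rw [Subgroup.mul_normal] at h1 h2
  obtain ⟨k₁, hk₁, z₁, hz₁, rfl⟩ := h1
  obtain ⟨k₂, hk₂, z₂, hz₂, rfl⟩ := h2
  have c1 := Subgroup.mem_center_iff.mp hz₁
  have c2 := Subgroup.mem_center_iff.mp hz₂
  have e1 : z₁ * (k₂ * z₂) * z₁⁻¹ = k₂ * z₂ := by rw [← c1 (k₂ * z₂)]; group
  have e2 : z₂ * k₁⁻¹ * z₂⁻¹ = k₁⁻¹ := by rw [← c2 k₁⁻¹]; group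
  have e : ⁅k₁ * z₁, k₂ * z₂⁆ = ⁅k₁, k₂⁆ := by
    calc ⁅k₁ * z₁, k₂ * z₂⁆
        = k₁ * (z₁ * (k₂ * z₂) * z₁⁻¹) * k₁⁻¹ * (k₂ * z₂)⁻¹ := by group
      _ = k₁ * (k₂ * z₂) * k₁⁻¹ * (k₂ * z₂)⁻¹ := by rw [e1]
      _ = k₁ * k₂ * (z₂ * k₁⁻¹ * z₂⁻¹) * k₂⁻¹ := by group
      _ = k₁ * k₂ * k₁⁻¹ * k₂⁻¹ := by rw [e2]
      _ = ⁅k₁, k₂⁆ := by group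
  rw [e]
  exact K.mul_mem (K.mul_mem (K.mul_mem hk₁ hk₂) (K.inv_mem hk₁)) (K.inv_mem hk₂)

lemma eq_top_of_sup_commutator_aux (d : ℕ) :
    ∀ (G : Type) [Group G] [Group.IsNilpotent G], Group.nilpotencyClass G = d →
      ∀ K : Subgroup G, K ⊔ commutator G = ⊤ → K = ⊤ := by
  induction d with
  | zero =>
    intro G _ _ hd K hK
    have : Subsingleton G := Group.nilpotencyClass_zero_iff_subsingleton.mp hd
    exact Subsingleton.elim _ _
  | succ d ih =>
    intro G _ _ hd K hK
    have hsurj := QuotientGroup.mk'_surjective (Subgroup.center G)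
    have hclass : Group.nilpotencyClass (G ⧸ Subgroup.center G) = d := by
      rw [Group.nilpotencyClass_quotient_center, hd]; rfl
    have hmap : Subgroup.map (QuotientGroup.mk' _) K ⊔ commutator (G ⧸ Subgroup.center G) = ⊤ := by
      have h2 : Subgroup.map (QuotientGroup.mk' (Subgroup.center G)) (K ⊔ commutator G) = ⊤ := by
        rw [hK, Subgroup.map_top_of_surjective _ hsurj]
      rw [Subgroup.map_sup] at h2
      rwa [_root_.commutator_def, Subgroup.map_commutator,
        Subgroup.map_top_of_surjective _ hsurj, ← _root_.commutator_def] at h2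
    have hQtop : Subgroup.map (QuotientGroup.mk' _) K = ⊤ := ih _ hclass _ hmap
    have hKZ : K ⊔ Subgroup.center G = ⊤ := by
      have h3 := congrArg (Subgroup.comap (QuotientGroup.mk' (Subgroup.center G))) hQtop
      rwa [Subgroup.comap_map_eq, QuotientGroup.ker_mk', Subgroup.comap_top] at h3
    have hcomm : commutator G ≤ K := by
      rw [_root_.commutator_def, Subgroup.commutator_le]
      intro g₁ _ g₂ _
      exact commutator_mem_of_sup_center K hKZ g₁ g₂
    rw [← hK, sup_eq_left.mpr hcomm]

lemma eq_top_of_sup_commutator {G : Type} [Group G] [Group.IsNilpotent G]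
    (K : Subgroup G) (hK : K ⊔ commutator G = ⊤) : K = ⊤ :=
  eq_top_of_sup_commutator_aux (Group.nilpotencyClass G) G rfl K hK

lemma commElt_mul_left {G : Type*} [Group G] (a b g : G) :
    ⁅a * b, g⁆ = a * ⁅b, g⁆ * a⁻¹ * ⁅a, g⁆ := by
  simp only [commutatorElement_def]; group

lemma commElt_mul_right {G : Type*} [Group G] (a g g' : G) :
    ⁅a, g * g'⁆ = ⁅a, g⁆ * (g * ⁅a, g'⁆ * g⁻¹) := by
  simp only [commutatorElement_def]; group

lemma commElt_inv_left {G : Type*} [Group G] (a g : G) :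
    ⁅a⁻¹, g⁆ = a⁻¹ * ⁅a, g⁆⁻¹ * a⁻¹⁻¹ := by
  simp only [commutatorElement_def]; group

lemma commElt_inv_right {G : Type*} [Group G] (a g : G) :
    ⁅a, g⁻¹⁆ = g⁻¹ * ⁅a, g⁆⁻¹ * g⁻¹⁻¹ := by
  simp only [commutatorElement_def]; group

lemma conj_central {G : Type*} [Group G] {z : G} (hz : z ∈ Subgroup.center G) (a : G) :
    a * z * a⁻¹ = z := by
  rw [Subgroup.mem_center_iff.mp hz a]; group

section step
variable {G : Type*} [Group G]

local notation "L" => Subgroup.lowerCentralSeries (⊤ : Subgroup G)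

/-- The key commutator-calculus step. -/
lemma lcs_step (T Sk : Set G) (k : ℕ) (hSk1 : Sk ⊆ (L k : Subgroup G))
    (hSk2 : (L k : Subgroup G) ≤ closure Sk ⊔ L (k + 1)) (hT : closure T = ⊤) :
    (L (k + 1) : Subgroup G) ≤
      closure ((fun p : G × G => ⁅p.1, p.2⁆) '' (Sk ×ˢ T)) ⊔ L (k + 2) := by
  set Sk1 : Set G := (fun p : G × G => ⁅p.1, p.2⁆) '' (Sk ×ˢ T) with hSk1def
  let N := (⊤ : Subgroup G).lowerCentralSeries (k + 2)
  let π : G →* G ⧸ N := QuotientGroup.mk' N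
  have hπ : Function.Surjective π := QuotientGroup.mk'_surjective N
  have hker : π.ker = N := QuotientGroup.ker_mk' N
  have hcm : ∀ (M : Subgroup G), Subgroup.map π M ≤ Subgroup.map π (closure Sk1) →
      M ≤ closure Sk1 ⊔ L (k + 2) := by
    intro M hM x hx
    have hx2 : x ∈ Subgroup.comap π (Subgroup.map π (closure Sk1)) :=
      hM (Subgroup.mem_map_of_mem π hx)
    rwa [Subgroup.comap_map_eq, hker] at hx2
  apply hcm
  have hmapclosure : ∀ S : Set G, Subgroup.map π (closure S) = closure (π '' S) :=
    fun S => MonoidHom.map_closure π S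
  have hbot : Subgroup.map π (L (k + 2)) = ⊥ :=
    (Subgroup.map_eq_bot_iff _).mpr hker.ge
  have hcomm2 : Subgroup.map π (L (k + 2)) = ⁅Subgroup.map π (L (k+1)), (⊤ : Subgroup (G ⧸ N))⁆ := by
    show Subgroup.map π ⁅L (k+1), ⊤⁆ = _
    rw [Subgroup.map_commutator, Subgroup.map_top_of_surjective π hπ]
  have hcomm1 : Subgroup.map π (L (k + 1)) = ⁅Subgroup.map π (L k), (⊤ : Subgroup (G ⧸ N))⁆ := by
    show Subgroup.map π ⁅L k, ⊤⁆ = _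
    rw [Subgroup.map_commutator, Subgroup.map_top_of_surjective π hπ]
  have hZ : Subgroup.map π (L (k + 1)) ≤ Subgroup.center (G ⧸ N) := by
    rw [← Subgroup.centralizer_univ, ← Subgroup.coe_top,
      ← Subgroup.commutator_eq_bot_iff_le_centralizer, ← hcomm2]
    exact hbot
  set B : Set (G ⧸ N) := π '' Sk with hB
  set C : Subgroup (G ⧸ N) := closure (π '' Sk1) with hC
  have hBL : closure B ≤ Subgroup.map π (L k) := by
    rw [Subgroup.closure_le]
    rintro x ⟨s, hs, rfl⟩
    exact Subgroup.mem_map_of_mem π (hSk1 hs)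
  have hcent : ∀ b ∈ closure B, ∀ g : G ⧸ N, ⁅b, g⁆ ∈ Subgroup.center (G ⧸ N) := by
    intro b hb g
    apply hZ
    rw [hcomm1]
    exact Subgroup.commutator_mem_commutator (hBL hb) (Subgroup.mem_top g)
  have hmain : ∀ b ∈ closure B, ∀ g : G ⧸ N, ⁅b, g⁆ ∈ C := by
    intro b hb
    induction hb using Subgroup.closure_induction with
    | mem x hx =>
      obtain ⟨s, hs, rfl⟩ := hx
      have hcs : ∀ g : G ⧸ N, ⁅π s, g⁆ ∈ Subgroup.center (G ⧸ N) :=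
        hcent _ (Subgroup.subset_closure ⟨s, hs, rfl⟩)
      intro g
      have hgtop : g ∈ closure (π '' T) := by
        rw [← hmapclosure, hT, Subgroup.map_top_of_surjective π hπ]; trivial
      induction hgtop using Subgroup.closure_induction with
      | mem y hy =>
        obtain ⟨t, ht, rfl⟩ := hy
        apply Subgroup.subset_closure
        exact ⟨⁅s, t⁆, ⟨⟨s, t⟩, ⟨hs, ht⟩, rfl⟩, (map_commutatorElement π s t).symm⟩
      | one => simpa using C.one_mem
      | mul y z hy hz ihy ihz =>
        rw [commElt_mul_right, conj_central (hcs z) y]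
        exact C.mul_mem ihy ihz
      | inv y hy ihy =>
        rw [commElt_inv_right, conj_central ((Subgroup.center _).inv_mem (hcs y)) y⁻¹]
        exact C.inv_mem ihy
    | one => intro g; simpa using C.one_mem
    | mul x y hx hy ihx ihy =>
      intro g
      rw [commElt_mul_left, conj_central (hcent y hy g) x]
      exact C.mul_mem (ihy g) (ihx g)
    | inv x hx ihx =>
      intro g
      rw [commElt_inv_left, conj_central ((Subgroup.center _).inv_mem (hcent x hx g)) x⁻¹]
      exact C.inv_mem (ihx g)
  rw [hmapclosure Sk1, ← hC, hcomm1, Subgroup.commutator_le]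
  intro g₁ hg₁ g₂ _
  have hg₁' : g₁ ∈ (↑(closure B ⊔ Subgroup.map π (L (k + 1))) : Set (G ⧸ N)) := by
    have h5 : Subgroup.map π (L k) ≤ Subgroup.map π (closure Sk ⊔ L (k + 1)) :=
      Subgroup.map_mono hSk2
    have h4 := h5 hg₁
    rw [Subgroup.map_sup, hmapclosure] at h4
    exact h4
  haveI : (Subgroup.map π (L (k+1))).Normal := Subgroup.Normal.map inferInstance π hπ
  rw [Subgroup.mul_normal] at hg₁'
  obtain ⟨b, hb, z, hz, rfl⟩ := hg₁'
  have hzcom : Commute z g₂ := (Subgroup.mem_center_iff.mp (hZ hz) g₂).symm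
  have he : ⁅b * z, g₂⁆ = ⁅b, g₂⁆ := by
    rw [commElt_mul_left, commutatorElement_eq_one_iff_commute.mpr hzcom]
    group
  rw [he]
  exact hmain b hb g₂
end step

lemma lcs_approx {G : Type*} [Group G] (T : Set G) (hTf : T.Finite) (hT : closure T = ⊤) :
    ∀ k, ∃ S : Set G, S.Finite ∧ S ⊆ ((⊤ : Subgroup G).lowerCentralSeries k : Subgroup G) ∧
      (⊤ : Subgroup G).lowerCentralSeries k ≤ closure S ⊔ (⊤ : Subgroup G).lowerCentralSeries (k + 1) := by
  intro k
  induction k with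
  | zero =>
    refine ⟨T, hTf, fun x _ => Subgroup.mem_top x, ?_⟩
    rw [hT]; exact le_sup_left
  | succ k ih =>
    obtain ⟨S, hSf, hS1, hS2⟩ := ih
    refine ⟨(fun p : G × G => ⁅p.1, p.2⁆) '' (S ×ˢ T), (hSf.prod hTf).image _, ?_, ?_⟩
    · rintro x ⟨⟨s, t⟩, ⟨hs, ht⟩, rfl⟩
      exact Subgroup.commutator_mem_commutator (hS1 hs) (Subgroup.mem_top t)
    · exact lcs_step T S k hS1 hS2 hT

lemma lcs_fg {G : Type*} [Group G] {c : ℕ} (hbot : (⊤ : Subgroup G).lowerCentralSeries c = ⊥)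
    (T : Set G) (hTf : T.Finite) (hT : closure T = ⊤) (k : ℕ) :
    ((⊤ : Subgroup G).lowerCentralSeries k).FG := by
  have key : ∀ m k, c ≤ k + m → ((⊤ : Subgroup G).lowerCentralSeries k).FG := by
    intro m
    induction m with
    | zero =>
      intro k hk
      have : (⊤ : Subgroup G).lowerCentralSeries k = ⊥ := by
        rw [← le_bot_iff, ← hbot]
        exact Subgroup.lowerCentralSeries_antitone _ (by omega)
      rw [this]
      exact ⟨∅, by simp⟩
    | succ m ih =>
      intro k hk
      obtain ⟨S2, hS2c, hS2f⟩ := (Subgroup.fg_iff _).mp (ih (k + 1) (by omega))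
      obtain ⟨S, hSf, hS1, hS2⟩ := lcs_approx T hTf hT k
      have heq : (⊤ : Subgroup G).lowerCentralSeries k = closure (S ∪ S2) := by
        rw [Subgroup.closure_union, hS2c]
        apply le_antisymm hS2
        apply sup_le
        · rw [Subgroup.closure_le]; exact hS1
        · exact Subgroup.lowerCentralSeries_antitone _ (by omega)
      exact (Subgroup.fg_iff _).mpr ⟨S ∪ S2, heq.symm, hSf.union hS2f⟩
  exact key c k (by omega)

lemma comm_fg_surj_inj {A : Type*} [CommGroup A] [Group.FG A] (f : A →* A)
    (hf : Function.Surjective f) : Function.Injective f := by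
  haveI : AddGroup.FG (Additive A) := inferInstance
  haveI : Module.Finite ℤ (Additive A) := Module.Finite.iff_addGroup_fg.mpr inferInstance
  have := OrzechProperty.injective_of_surjective_endomorphism
    (R := ℤ) (M := Additive A) (MonoidHom.toAdditive f).toIntLinearMap hf
  exact this

lemma hopfian_nilpotent {G : Type*} [Group G] {c : ℕ}
    (hbot : (⊤ : Subgroup G).lowerCentralSeries c = ⊥) (T : Set G) (hTf : T.Finite)
    (hT : closure T = ⊤) (φ : G →* G) (hφ : Function.Surjective φ) :
    Function.Injective φ := by
  have hmap : ∀ k, Subgroup.map φ ((⊤ : Subgroup G).lowerCentralSeries k) = (⊤ : Subgroup G).lowerCentralSeries k :=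
    fun k => lcs_map_eq φ hφ k
  have hmaple : ∀ k, ∀ x ∈ (⊤ : Subgroup G).lowerCentralSeries k, φ x ∈ (⊤ : Subgroup G).lowerCentralSeries k := by
    intro k x hx
    rw [← hmap k]; exact Subgroup.mem_map_of_mem φ hx
  have key : ∀ k, φ.ker ≤ (⊤ : Subgroup G).lowerCentralSeries k := by
    intro k
    induction k with
    | zero => exact le_top
    | succ k ih =>
      intro x hx
      have hxk : x ∈ (⊤ : Subgroup G).lowerCentralSeries k := ih hx
      set Lk := (⊤ : Subgroup G).lowerCentralSeries k
      set M : Subgroup Lk := ((⊤ : Subgroup G).lowerCentralSeries (k+1)).subgroupOf Lk with hM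
      haveI : M.Normal := Subgroup.normal_subgroupOf
      -- commutativity of the quotient
      letI : CommGroup (Lk ⧸ M) :=
        { (inferInstance : Group (Lk ⧸ M)) with
          mul_comm := by
            intro a b
            induction a using QuotientGroup.induction_on with | H a =>
            induction b using QuotientGroup.induction_on with | H b =>
            rw [← QuotientGroup.mk_mul, ← QuotientGroup.mk_mul, QuotientGroup.eq]
            rw [hM, Subgroup.mem_subgroupOf]
            have : ((((a * b)⁻¹ * (b * a) : Lk)) : G) = ⁅(b : G)⁻¹, (a : G)⁻¹⁆ := by
              push_cast
              simp only [commutatorElement_def]; group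
            rw [this]
            exact Subgroup.commutator_mem_commutator (Lk.inv_mem b.2) (Subgroup.mem_top _) }
      haveI : Group.FG Lk := (Group.fg_iff_subgroup_fg Lk).mpr (lcs_fg hbot T hTf hT k)
      haveI : Group.FG (Lk ⧸ M) :=
        Group.fg_of_surjective (QuotientGroup.mk'_surjective M)
      -- the induced endomorphism
      let φr : Lk →* Lk := (φ.domRestrict Lk).codRestrict Lk (fun y => hmaple k y.1 y.2)
      have hker : ∀ y : Lk, y ∈ M → ((QuotientGroup.mk' M).comp φr) y = 1 := by
        intro y hy
        rw [MonoidHom.comp_apply, ← (QuotientGroup.mk' M).map_one, QuotientGroup.mk'_eq_mk',]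
        · exact ⟨(φr y)⁻¹, by
            constructor
            · exact M.inv_mem (by
                show (φ y.1) ∈ (⊤ : Subgroup G).lowerCentralSeries (k+1)
                exact hmaple (k+1) y.1 hy)
            · group⟩
      let ψ : (Lk ⧸ M) →* (Lk ⧸ M) := QuotientGroup.lift M ((QuotientGroup.mk' M).comp φr) hker
      have hψs : Function.Surjective ψ := by
        intro a
        induction a using QuotientGroup.induction_on with | H y =>
        have : y.1 ∈ Subgroup.map φ Lk := by rw [hmap k]; exact y.2
        obtain ⟨x', hx', hfx⟩ := this
        refine ⟨QuotientGroup.mk (⟨x', hx'⟩ : Lk), ?_⟩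
        show QuotientGroup.mk (φr ⟨x', hx'⟩) = QuotientGroup.mk y
        congr 1
        exact Subtype.ext hfx
      have hψi : Function.Injective ψ := comm_fg_surj_inj ψ hψs
      -- conclude
      have h1 : ψ (QuotientGroup.mk (⟨x, hxk⟩ : Lk)) = 1 := by
        show QuotientGroup.mk (φr ⟨x, hxk⟩) = 1
        rw [QuotientGroup.eq_one_iff]
        show φ x ∈ (⊤ : Subgroup G).lowerCentralSeries (k+1)
        have : φ x = 1 := hx
        rw [this]; exact Subgroup.one_mem _
      have h2 : QuotientGroup.mk (⟨x, hxk⟩ : Lk) = (1 : Lk ⧸ M) := by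
        apply hψi; rw [h1, map_one]
      have h3 : (⟨x, hxk⟩ : Lk) ∈ M := (QuotientGroup.eq_one_iff _).mp h2
      exact h3
  rw [← MonoidHom.ker_eq_bot_iff, ← le_bot_iff, ← hbot]
  exact key c

/-- If the images in the abelianization of a family `h` of `n` elements of the free
nilpotent group `H` of class `c` and rank `n` form a `ℤ`-basis of the abelianization,
then `h` generates `H` and there is an automorphism of `H` carrying the canonical
generators to the `h i`. -/
theorem basis_in_abelianization_gives_automorphism {n c : ℕ} (hn : 1 ≤ n) (hc : 1 ≤ c)
    (h : Fin n → FreeNilpotentGroup n c)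
    (bs : Module.Basis (Fin n) ℤ (Additive (Abelianization (FreeNilpotentGroup n c))))
    (hbs : ∀ i, bs i = Additive.ofMul (Abelianization.of (h i))) :
    Subgroup.closure (Set.range h) = ⊤ ∧
      ∃ Φ : FreeNilpotentGroup n c ≃* FreeNilpotentGroup n c,
        ∀ i, Φ (QuotientGroup.mk (FreeGroup.of i)) = h i := by
  let F := FreeGroup (Fin n)
  let H := FreeNilpotentGroup n c
  let N : Subgroup F := (⊤ : Subgroup F).lowerCentralSeries c
  let π : F →* H := QuotientGroup.mk' N
  have hπ : Function.Surjective π := QuotientGroup.mk'_surjective N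
  have hbot : (⊤ : Subgroup H).lowerCentralSeries c = ⊥ := lcs_quot_eq_bot F c
  haveI : Group.IsNilpotent H := isNilpotent_quot F c
  let T : Set H := Set.range (fun i => π (FreeGroup.of i))
  have hTf : T.Finite := Set.finite_range _
  have hTtop : closure T = ⊤ := by
    have h1 : Subgroup.map π (closure (Set.range FreeGroup.of)) =
        closure (π '' Set.range FreeGroup.of) := MonoidHom.map_closure π _
    rw [FreeGroup.closure_range_of, Subgroup.map_top_of_surjective π hπ] at h1
    rw [← Set.range_comp] at h1
    exact h1.symm
  let η : H →* Abelianization H := Abelianization.of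
  have hker_η : η.ker = commutator H := by
    ext x
    exact QuotientGroup.eq_one_iff x
  have hclosure : Subgroup.closure (Set.range h) = ⊤ := by
    apply eq_top_of_sup_commutator
    rw [← hker_η]
    have hmapcl : Subgroup.map η (closure (Set.range h)) =
        closure (Set.range (fun i => η (h i))) := by
      rw [MonoidHom.map_closure, ← Set.range_comp]
      rfl
    have htopA : closure (Set.range (fun i => η (h i))) = ⊤ := by
      rw [eq_top_iff]
      intro a _
      have h3 : Additive.ofMul a ∈ AddSubgroup.closure (Set.range bs) := by
        rw [← Submodule.span_int_eq_addSubgroupClosure, bs.span_eq]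
        trivial
      rw [show ⇑bs = fun i => Additive.ofMul (η (h i)) from funext hbs] at h3
      have h5 : ∀ x ∈ AddSubgroup.closure (Set.range (fun i => Additive.ofMul (η (h i)))),
          Additive.toMul x ∈ closure (Set.range (fun i => η (h i))) := by
        intro x hx
        induction hx using AddSubgroup.closure_induction with
        | mem y hy =>
          obtain ⟨i, rfl⟩ := hy
          exact Subgroup.subset_closure ⟨i, rfl⟩
        | zero => exact Subgroup.one_mem _
        | add y z hy hz ihy ihz => exact Subgroup.mul_mem _ ihy ihz
        | neg y hy ihy => exact Subgroup.inv_mem _ ihy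
      exact h5 _ h3
    have h6 := congrArg (Subgroup.comap η) (hmapcl.trans htopA)
    rw [Subgroup.comap_map_eq, Subgroup.comap_top] at h6
    exact h6
  refine ⟨hclosure, ?_⟩
  have hcond : ∀ x ∈ N, FreeGroup.lift h x = 1 := by
    intro x hx
    have h8 : FreeGroup.lift h x ∈ Subgroup.map (FreeGroup.lift h) ((⊤ : Subgroup F).lowerCentralSeries c) :=
      Subgroup.mem_map_of_mem _ hx
    have h7 := lowerCentralSeries.map (FreeGroup.lift h) c h8
    rw [hbot] at h7
    exact h7
  let φ : H →* H := QuotientGroup.lift N (FreeGroup.lift h) hcond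
  have hφgen : ∀ i, φ (QuotientGroup.mk (FreeGroup.of i)) = h i := by
    intro i
    show φ (π (FreeGroup.of i)) = h i
    show FreeGroup.lift h (FreeGroup.of i) = h i
    exact FreeGroup.lift_apply_of
  have hφsurj : Function.Surjective φ := by
    rw [← MonoidHom.range_eq_top]
    rw [eq_top_iff, ← hclosure, Subgroup.closure_le]
    rintro x ⟨i, rfl⟩
    exact ⟨QuotientGroup.mk (FreeGroup.of i), hφgen i⟩
  have hφinj : Function.Injective φ := hopfian_nilpotent hbot T hTf hTtop φ hφsurj
  exact ⟨MulEquiv.ofBijective φ ⟨hφinj, hφsurj⟩, hφgen⟩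
end

section
/- Let S := FreeSemigroup α be a free semigroup and let σ, τ : S →ₙ* S be semigroup endomorphisms. If w ∈ S satisfies τ (σ w) = w, then for every letter x ∈ α occurring in the word w, the image σ (FreeSemigroup.of x) is a single letter, i.e., has length 1. -/
private lemma len_le_sum : ∀ (l : List ℕ), (∀ a ∈ l, 1 ≤ a) → l.length ≤ l.sum
  | [], _ => le_refl _
  | a :: l, h => by
      have := len_le_sum l (fun b hb => h b (List.mem_cons_of_mem _ hb))
      have ha := h a (List.mem_cons_self (a := a) (l := l))
      simp only [List.length_cons, List.sum_cons]
      omega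

private lemma all_one (l : List ℕ) (h1 : ∀ a ∈ l, 1 ≤ a) (h2 : l.sum ≤ l.length) :
    ∀ a ∈ l, a = 1 := by
  induction l with
  | nil => simp
  | cons a l ih =>
      have ha := h1 a (List.mem_cons_self (a := a) (l := l))
      have hl := len_le_sum l (fun b hb => h1 b (List.mem_cons_of_mem _ hb))
      simp only [List.sum_cons, List.length_cons] at h2
      intro b hb
      rcases List.mem_cons.1 hb with rfl | hb
      · omega
      · exact ih (fun c hc => h1 c (List.mem_cons_of_mem _ hc)) (by omega) b hb

private lemma length_le_apply {α : Type*} (f : FreeSemigroup α →ₙ* FreeSemigroup α)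
    (w : FreeSemigroup α) : w.length ≤ (f w).length := by
  induction w with
  | ih1 x => simpa using Nat.one_le_iff_ne_zero.2 (by simp [FreeSemigroup.length])
  | ih2 x y hx hy => simp only [map_mul, FreeSemigroup.length_mul]; omega

private lemma length_apply_eq {α : Type*} (σ : FreeSemigroup α →ₙ* FreeSemigroup α)
    (w : FreeSemigroup α) :
    (σ w).length = ((w.head :: w.tail).map (fun x => (σ (FreeSemigroup.of x)).length)).sum := by
  induction w with
  | ih1 x => simp [FreeSemigroup.of]
  | ih2 x y hx hy =>
      simp only [map_mul, FreeSemigroup.length_mul, hx, hy]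
      simp [FreeSemigroup.of]

/-- If `σ`, `τ` are endomorphisms of a free semigroup and `τ (σ w) = w`, then `σ` sends
every letter occurring in the word `w` to a single letter (a word of length 1). -/
theorem length_one_of_retract {α : Type*}
    (σ τ : FreeSemigroup α →ₙ* FreeSemigroup α)
    (w : FreeSemigroup α) (hw : τ (σ w) = w) :
    ∀ x ∈ w.head :: w.tail, (σ (FreeSemigroup.of x)).length = 1 := by
  have h1 : (σ w).length ≤ w.length := by
    have := length_le_apply τ (σ w); rwa [hw] at this
  have h2 := length_apply_eq σ w
  set l := (w.head :: w.tail).map (fun x => (σ (FreeSemigroup.of x)).length) with hl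
  have hpos : ∀ a ∈ l, 1 ≤ a := by
    intro a ha
    rcases List.mem_map.1 ha with ⟨x, _, rfl⟩
    exact Nat.one_le_iff_ne_zero.2 (by simp [FreeSemigroup.length])
  have hlen : l.length = w.length := by simp [hl, FreeSemigroup.length]
  have := all_one l hpos (by omega)
  intro x hx
  exact this _ (List.mem_map.2 ⟨x, hx, rfl⟩)
end
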